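/- With H₀(f,ξ) = ξ²f/2 + (g²π²/6)f³ and M(U,ξ) the kinetic Maxwellian, one has ∫_ℝ ξ·H₀(M(U,ξ),ξ) dξ = (h u²/2 + g h²)·u, the entropy flux G(U). -/

import Mathlib

open MeasureTheory Real

noncomputable def Mx (g h u ξ : ℝ) : ℝ := (1/(g*π)) * Real.sqrt (max 0 (2*g*h - (ξ-u)^2))
noncomputable def H0 (g f ξ : ℝ) : ℝ := ξ^2*f/2 + (g^2*π^2/6)*f^3
noncomputable def dH0 (g f ξ : ℝ) : ℝ := ξ^2/2 + (g^2*π^2/2)*f^2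

lemma odd_interval_int (f : ℝ → ℝ) (c : ℝ) (hf : ∀ x, f (-x) = -f x) :
    ∫ x in (-c)..c, f x = 0 := by
  have h1 : (∫ x in (-c)..c, f (-x)) = ∫ x in (-c)..c, f x := by
    simpa using intervalIntegral.integral_comp_neg (a := -c) (b := c) f
  have h2 : (∫ x in (-c)..c, f (-x)) = -∫ x in (-c)..c, f x := by
    simp_rw [hf]
    exact intervalIntegral.integral_neg
  linarith

lemma int_sq_sqrt : ∫ t in (-1:ℝ)..1, t^2 * √(1 - t^2) = π/8 := by
  have hc : Continuous fun t : ℝ => (1 - 4*t^2) * √(1 - t^2) := by fun_prop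
  have key : (∫ t in (-1:ℝ)..1, (1 - 4*t^2) * √(1 - t^2)) = 0 := by
    have hmain := intervalIntegral.integral_eq_sub_of_hasDeriv_right_of_le
      (f := fun t : ℝ => t*(1-t^2)*√(1-t^2))
      (f' := fun t : ℝ => (1 - 4*t^2) * √(1 - t^2)) (by norm_num : (-1:ℝ) ≤ 1)
      (Continuous.continuousOn (by fun_prop))
      (by
        intro x hx
        have hx1 : (0:ℝ) < 1 - x^2 := by nlinarith [hx.1, hx.2]
        have hsne : √(1-x^2) ≠ 0 := ne_of_gt (Real.sqrt_pos.mpr hx1)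
        have hd1 : HasDerivAt (fun t : ℝ => 1 - t^2) (-(2*x)) x := by
          simpa using ((hasDerivAt_pow 2 x).const_sub 1)
        have hds : HasDerivAt (fun t : ℝ => √(1 - t^2)) (-(2*x) / (2*√(1-x^2))) x :=
          hd1.sqrt (ne_of_gt hx1)
        have hdp : HasDerivAt (fun t : ℝ => t*(1-t^2)) (1 - 3*x^2) x := by
          have : HasDerivAt (fun t : ℝ => t * (1 - t^2)) (1 * (1 - x^2) + x * (-(2*x))) x :=
            (hasDerivAt_id x).mul hd1
          convert this using 1
          ring
        have hprod := hdp.mul hds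
        have hval : (1 - 3*x^2) * √(1-x^2) + (x*(1-x^2)) * (-(2*x) / (2*√(1-x^2)))
            = (1 - 4*x^2) * √(1-x^2) := by
          have hdiv : (1 - x^2) / √(1-x^2) = √(1-x^2) := Real.div_sqrt
          rw [show (x*(1-x^2)) * (-(2*x)/(2*√(1-x^2))) = -(x^2) * ((1-x^2)/√(1-x^2)) by
            field_simp, hdiv]
          ring
        rw [hval] at hprod
        exact hprod.hasDerivWithinAt)
      (hc.intervalIntegrable _ _)
    rw [hmain]
    norm_num
  have hs : Continuous fun t : ℝ => √(1 - t^2) := by fun_prop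
  have ht2 : Continuous fun t : ℝ => t^2 * √(1 - t^2) := by fun_prop
  have hsplit : (∫ t in (-1:ℝ)..1, (1 - 4*t^2) * √(1 - t^2))
      = (∫ t in (-1:ℝ)..1, √(1 - t^2)) - 4 * ∫ t in (-1:ℝ)..1, t^2 * √(1 - t^2) := by
    rw [← intervalIntegral.integral_const_mul,
      ← intervalIntegral.integral_sub (hs.intervalIntegrable _ _)
        ((by fun_prop : Continuous fun t : ℝ => 4 * (t^2 * √(1 - t^2))).intervalIntegrable _ _)]
    congr 1
    ext t
    ring
  rw [hsplit, integral_sqrt_one_sub_sq] at key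
  linarith

lemma int_sqrt_a (a : ℝ) (ha : 0 ≤ a) : ∫ s in (-a)..a, √(a^2 - s^2) = π * a^2 / 2 := by
  rcases (eq_or_lt_of_le ha : (0:ℝ) = a ∨ 0 < a) with h | h
  · subst h; simp
  · have key : (∫ x in (-1:ℝ)..1, √(a^2 - (a*x)^2)) = a * (π/2) := by
      have heq : ∀ x : ℝ, √(a^2 - (a*x)^2) = a * √(1 - x^2) := by
        intro x
        rw [show a^2 - (a*x)^2 = a^2 * (1 - x^2) by ring, Real.sqrt_mul (sq_nonneg a),
          Real.sqrt_sq ha]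
      simp_rw [heq, intervalIntegral.integral_const_mul, integral_sqrt_one_sub_sq]
    have h2 := intervalIntegral.integral_comp_mul_left (a := -1) (b := 1)
      (fun s => √(a^2 - s^2)) (ne_of_gt h)
    rw [key, smul_eq_mul, show a*(-1) = -a by ring, show a*1 = a by ring] at h2
    field_simp at h2
    linear_combination -h2/2

lemma int_sq_sqrt_a (a : ℝ) (ha : 0 ≤ a) :
    ∫ s in (-a)..a, s^2 * √(a^2 - s^2) = π * a^4 / 8 := by
  rcases (eq_or_lt_of_le ha : (0:ℝ) = a ∨ 0 < a) with h | h
  · subst h; simp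
  · have key : (∫ x in (-1:ℝ)..1, (a*x)^2 * √(a^2 - (a*x)^2)) = a^3 * (π/8) := by
      have heq : ∀ x : ℝ, (a*x)^2 * √(a^2 - (a*x)^2) = a^3 * (x^2 * √(1 - x^2)) := by
        intro x
        rw [show a^2 - (a*x)^2 = a^2 * (1 - x^2) by ring, Real.sqrt_mul (sq_nonneg a),
          Real.sqrt_sq ha]
        ring
      simp_rw [heq, intervalIntegral.integral_const_mul, int_sq_sqrt]
    have h2 := intervalIntegral.integral_comp_mul_left (a := -1) (b := 1)
      (fun s => s^2 * √(a^2 - s^2)) (ne_of_gt h)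
    rw [key, smul_eq_mul, show a*(-1) = -a by ring, show a*1 = a by ring] at h2
    field_simp at h2
    linear_combination -h2/8

lemma poly_sqrt_int (a c0 c1 c2 c3 : ℝ) (ha : 0 ≤ a) :
    (∫ s in (-a)..a, (c0 + c1*s + c2*s^2 + c3*s^3) * √(a^2 - s^2))
      = c0 * (π*a^2/2) + c2 * (π*a^4/8) := by
  have h1 : Continuous fun s : ℝ => (c0 + c2*s^2) * √(a^2 - s^2) := by fun_prop
  have h2 : Continuous fun s : ℝ => (c1*s + c3*s^3) * √(a^2 - s^2) := by fun_prop
  have hsplit : (∫ s in (-a)..a, (c0 + c1*s + c2*s^2 + c3*s^3) * √(a^2 - s^2))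
      = (∫ s in (-a)..a, (c0 + c2*s^2) * √(a^2 - s^2))
        + ∫ s in (-a)..a, (c1*s + c3*s^3) * √(a^2 - s^2) := by
    rw [← intervalIntegral.integral_add (h1.intervalIntegrable _ _) (h2.intervalIntegrable _ _)]
    congr 1
    ext s
    ring
  have hodd : (∫ s in (-a)..a, (c1*s + c3*s^3) * √(a^2 - s^2)) = 0 := by
    apply odd_interval_int
    intro x
    rw [show a^2 - (-x)^2 = a^2 - x^2 by ring]
    ring
  have heven : (∫ s in (-a)..a, (c0 + c2*s^2) * √(a^2 - s^2))
      = c0 * (∫ s in (-a)..a, √(a^2 - s^2)) + c2 * ∫ s in (-a)..a, s^2 * √(a^2 - s^2) := by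
    rw [← intervalIntegral.integral_const_mul, ← intervalIntegral.integral_const_mul,
      ← intervalIntegral.integral_add
        ((by fun_prop : Continuous fun s : ℝ => c0 * √(a^2 - s^2)).intervalIntegrable _ _)
        ((by fun_prop : Continuous fun s : ℝ => c2 * (s^2 * √(a^2 - s^2))).intervalIntegrable _ _)]
    congr 1
    ext s
    ring
  rw [hsplit, hodd, add_zero, heven, int_sqrt_a a ha, int_sq_sqrt_a a ha]

theorem kinetic_entropy_flux_integral (g h u : ℝ) (hg : 0 < g) (hh : 0 ≤ h) :
    (∫ ξ : ℝ, ξ * H0 g (Mx g h u ξ) ξ) = (h * u^2 / 2 + g * h^2) * u := by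
  set a := Real.sqrt (2*g*h) with ha_def
  have ha : 0 ≤ a := Real.sqrt_nonneg _
  have ha2 : a^2 = 2*g*h := Real.sq_sqrt (by positivity)
  have hgne : g ≠ 0 := ne_of_gt hg
  have hπ : π ≠ 0 := Real.pi_ne_zero
  have hsupp : Function.support (fun ξ : ℝ => ξ * H0 g (Mx g h u ξ) ξ)
      ⊆ Set.Ioc (u - a) (u + a) := by
    intro x hx
    simp only [Function.mem_support] at hx
    by_contra hmem
    apply hx
    have hout : 2*g*h - (x-u)^2 ≤ 0 := by
      simp only [Set.mem_Ioc, not_and_or, not_lt, not_le] at hmem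
      rcases hmem with h1 | h1
      · have e1 : 0 ≤ u - x - a := by linarith
        have e2 : 0 ≤ u - x + a := by linarith
        nlinarith [mul_nonneg e1 e2]
      · have e1 : 0 ≤ x - u - a := by linarith
        have e2 : 0 ≤ x - u + a := by linarith
        nlinarith [mul_nonneg e1 e2]
    have hmax : max 0 (2*g*h - (x-u)^2) = 0 := max_eq_left hout
    simp [Mx, H0, hmax]
  rw [← intervalIntegral.integral_eq_integral_of_support_subset hsupp]
  have hshift : (∫ ξ in (u-a)..(u+a), ξ * H0 g (Mx g h u ξ) ξ)
      = ∫ s in (-a)..a, (s+u) * H0 g (Mx g h u (s+u)) (s+u) := by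
    rw [show u - a = -a + u by ring, show u + a = a + u by ring,
      ← intervalIntegral.integral_comp_add_right (fun ξ => ξ * H0 g (Mx g h u ξ) ξ) u]
  rw [hshift]
  have hcong : Set.EqOn (fun s : ℝ => (s+u) * H0 g (Mx g h u (s+u)) (s+u))
      (fun s : ℝ => ((u^3/(2*g*π) + a^2*u/(6*g*π)) + (3*u^2/(2*g*π) + a^2/(6*g*π))*s
        + (4*u/(3*g*π))*s^2 + (1/(3*g*π))*s^3) * √(a^2 - s^2)) (Set.uIcc (-a) a) := by
    intro s hs
    rw [Set.uIcc_of_le (by linarith : -a ≤ a)] at hs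
    have hX : 0 ≤ a^2 - s^2 := by nlinarith [hs.1, hs.2]
    have hM : Mx g h u (s+u) = √(a^2 - s^2) / (g*π) := by
      simp only [Mx]
      rw [show s + u - u = s by ring, show 2*g*h - s^2 = a^2 - s^2 by rw [ha2],
        max_eq_right hX]
      ring
    have hcube : (√(a^2-s^2))^3 = (a^2-s^2) * √(a^2-s^2) := by
      rw [pow_succ, Real.sq_sqrt hX]
    simp only [H0, hM]
    rw [div_pow, hcube]
    field_simp
    ring
  rw [intervalIntegral.integral_congr hcong, poly_sqrt_int a _ _ _ _ ha]
  have ha4 : a^4 = (2*g*h)^2 := by rw [← ha2]; ring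
  rw [ha4, ha2]
  field_simp
  ring
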